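/- −1 is not a sum of 14 fourth powers in ℚ₂: there do not exist x₁, …, x₁₄ ∈ ℚ₂ with x₁⁴ + ⋯ + x₁₄⁴ = −1. -/

import Mathlib

open Finset

lemma zmod16_pow4 : ∀ c : ZMod (2 ^ 4), c ^ 4 = 0 ∨ c ^ 4 = 1 := by decide

theorem stmt_6 : ¬ ∃ x : Fin 14 → ℚ_[2], (∑ i, x i ^ 4) = -1 := by
  rintro ⟨x, hx⟩
  classical
  have hex : ∃ n : ℕ, ∀ i, ‖(2 : ℚ_[2]) ^ n * x i‖ ≤ 1 := by
    have hbound : ∀ i : Fin 14, ∃ m : ℕ, ‖x i‖ ≤ 2 ^ m := fun i => by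
      obtain ⟨m, hm⟩ := pow_unbounded_of_one_lt (‖x i‖) (by norm_num : (1:ℝ) < 2)
      exact ⟨m, hm.le⟩
    choose m hm using hbound
    refine ⟨Finset.univ.sup m, fun i => ?_⟩
    have h2 : ‖(2 : ℚ_[2])‖ = 2⁻¹ := by
      simpa using Padic.norm_p (p := 2)
    rw [norm_mul, norm_pow, h2]
    have h1 : ‖x i‖ ≤ 2 ^ (Finset.univ.sup m) :=
      (hm i).trans (by
        apply pow_le_pow_right₀ (by norm_num)
        exact Finset.le_sup (Finset.mem_univ i))
    calc (2⁻¹ : ℝ) ^ (Finset.univ.sup m) * ‖x i‖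
        ≤ (2⁻¹ : ℝ) ^ (Finset.univ.sup m) * 2 ^ (Finset.univ.sup m) := by
          apply mul_le_mul_of_nonneg_left h1 (by positivity)
      _ = 1 := by rw [← mul_pow]; norm_num
  set n := Nat.find hex with hn
  have hP : ∀ i, ‖(2 : ℚ_[2]) ^ n * x i‖ ≤ 1 := Nat.find_spec hex
  set y : Fin 14 → ℤ_[2] := fun i => ⟨(2 : ℚ_[2]) ^ n * x i, hP i⟩ with hy
  have key : (∑ i, y i ^ 4) = -(2 ^ (4 * n) : ℤ_[2]) := by
    apply Subtype.coe_injective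
    push_cast
    have step : ∀ i : Fin 14, ((y i : ℚ_[2])) ^ 4 = 2 ^ (4 * n) * x i ^ 4 := by
      intro i
      show ((2 : ℚ_[2]) ^ n * x i) ^ 4 = _
      rw [mul_pow, ← pow_mul, mul_comm n 4]
    calc (∑ i, ((y i : ℚ_[2])) ^ 4) = ∑ i, 2 ^ (4 * n) * x i ^ 4 := by
          exact Finset.sum_congr rfl fun i _ => step i
      _ = 2 ^ (4 * n) * ∑ i, x i ^ 4 := by rw [Finset.mul_sum]
      _ = -(2 : ℚ_[2]) ^ (4 * n) := by rw [hx]; ring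
  -- map to ZMod (2^4)
  set φ := PadicInt.toZModPow (p := 2) 4 with hφ
  have hsum : (∑ i, (φ (y i)) ^ 4) = -((2 : ZMod (2 ^ 4)) ^ (4 * n)) := by
    have := congrArg φ key
    simpa [map_sum, map_pow, map_neg, map_ofNat] using this
  have hbex : ∀ i, ∃ k : ℕ, k ≤ 1 ∧ (φ (y i)) ^ 4 = (k : ZMod (2 ^ 4)) := by
    intro i
    rcases zmod16_pow4 (φ (y i)) with h | h
    · exact ⟨0, by omega, by simpa using h⟩
    · exact ⟨1, by omega, by simpa using h⟩
  choose b hb1 hb using hbex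
  have hble : (∑ i, b i) ≤ 14 := by
    calc (∑ i, b i) ≤ ∑ _i : Fin 14, 1 := Finset.sum_le_sum fun i _ => hb1 i
      _ = 14 := by simp
  have hsum' : ((∑ i, b i : ℕ) : ZMod (2 ^ 4)) = -((2 : ZMod (2 ^ 4)) ^ (4 * n)) := by
    rw [← hsum]; push_cast; exact Finset.sum_congr rfl fun i _ => (hb i).symm
  have hval : (((∑ i, b i : ℕ) : ZMod (2 ^ 4))).val = ∑ i, b i :=
    ZMod.val_cast_of_lt (by omega)
  rcases Nat.eq_zero_or_pos n with hn0 | hnpos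
  · -- n = 0 : sum ≡ -1 mod 16, impossible with ≤ 14 terms
    rw [hn0] at hsum'
    simp only [Nat.mul_zero, pow_zero] at hsum'
    have h15 : (∑ i, b i) = ((-1 : ZMod (2 ^ 4))).val := by
      rw [← hval, hsum']
    have hv15 : ((-1 : ZMod (2 ^ 4))).val = 15 := by decide
    omega
  · -- n ≥ 1 : RHS is 0 mod 16, but some y i is a unit
    have h16 : ((2 : ZMod (2 ^ 4)) ^ (4 * n)) = 0 := by
      have h4 : 4 * n = 4 + 4 * (n - 1) := by omega
      rw [h4, pow_add]
      have h24 : (2 : ZMod (2 ^ 4)) ^ 4 = 0 := by decide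
      rw [h24, zero_mul]
    rw [h16, neg_zero] at hsum'
    have hzero : (∑ i, b i) = 0 := by
      rw [← hval, hsum', ZMod.val_zero]
    -- minimality of n gives a unit among the y i
    have hmin := Nat.find_min hex (show n - 1 < n by omega)
    push_neg at hmin
    obtain ⟨i₀, hi₀⟩ := hmin
    have h2ne : (2 : ℚ_[2]) ≠ 0 := by norm_num
    have hunit : IsUnit (y i₀) := by
      rw [PadicInt.isUnit_iff]
      by_contra hne
      have hlt : ‖y i₀‖ < 1 := lt_of_le_of_ne (y i₀).2 hne
      obtain ⟨w, hw⟩ := (PadicInt.norm_lt_one_iff_dvd _).mp hlt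
      have hy2 : (2 : ℚ_[2]) ^ n * x i₀ = 2 * (w : ℚ_[2]) := by
        have hc := congrArg (fun z : ℤ_[2] => (z : ℚ_[2])) hw
        push_cast at hc
        have h2c : ((2 : ℤ_[2]) : ℚ_[2]) = 2 := PadicInt.coe_natCast 2
        simpa [hy, h2c] using hc
      obtain ⟨k, hk⟩ : ∃ k, n = k + 1 := ⟨n - 1, by omega⟩
      have hk1 : n - 1 = k := by omega
      rw [hk1] at hi₀
      have hsplit : (2 : ℚ_[2]) ^ n * x i₀ = 2 * ((2 : ℚ_[2]) ^ k * x i₀) := by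
        rw [hk, pow_succ', mul_assoc]
      have hweq : (2 : ℚ_[2]) ^ k * x i₀ = (w : ℚ_[2]) :=
        mul_left_cancel₀ h2ne (hsplit.symm.trans hy2)
      rw [hweq] at hi₀
      exact absurd w.2 (not_le.mpr hi₀)
    have hu4 : IsUnit ((φ (y i₀)) ^ 4) := (hunit.map φ).pow 4
    have hbi : b i₀ = 0 := by
      have := Finset.single_le_sum (f := b) (fun i _ => Nat.zero_le _)
        (Finset.mem_univ i₀)
      omega
    have hzero4 : (φ (y i₀)) ^ 4 = 0 := by rw [hb i₀, hbi]; simp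
    haveI : Fact (1 < 2 ^ 4) := ⟨by norm_num⟩
    exact hu4.ne_zero hzero4
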